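/- For every (α,β,γ) ∈ D there exists δ ∈ Δ such that J(w,δ) ≤ G(w,(α,β,γ)) for all w ∈ W. -/

import Mathlib

open Finset

/-- The maximum revenue `r̄` among the positions `1, …, L+1`. -/
noncomputable def rbar (L : ℕ) (ρ : ℕ → ℝ) : ℝ :=
  (Finset.Icc 1 (L + 1)).sup' (Finset.nonempty_Icc.mpr (by omega)) ρ

/-- Membership in `Δ = {δ ∈ ℝ^{L+1} : 0 ≤ δ 1 ≤ ⋯ ≤ δ (L+1) ≤ r̄}`. -/
def memDelta (L : ℕ) (ρ δ : ℕ → ℝ) : Prop :=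
  0 ≤ δ 1 ∧ (∀ ℓ, 1 ≤ ℓ → ℓ ≤ L → δ ℓ ≤ δ (ℓ + 1)) ∧ δ (L + 1) ≤ rbar L ρ

/-- Membership in `W = {w ∈ ℝ^{N+1} : 0 ≤ w ℓ ≤ 1 for all ℓ, w (L+1) = 1}`. -/
def memW (N L : ℕ) (w : ℕ → ℝ) : Prop :=
  (∀ ℓ, 1 ≤ ℓ → ℓ ≤ N + 1 → 0 ≤ w ℓ ∧ w ℓ ≤ 1) ∧ w (L + 1) = 1

/-- The objective `J(w, δ)`. -/
noncomputable def Jfun (L : ℕ) (ρ w δ : ℕ → ℝ) : ℝ :=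
  δ (L + 1) + ∑ ℓ ∈ Finset.Icc 1 L, (max 0 (ρ ℓ - δ ℓ) - (δ (ℓ + 1) - δ ℓ)) * w ℓ

/-- Membership in the dual feasible set `D`. -/
def memD (N : ℕ) (ρ α β : ℕ → ℝ) (γ : ℝ) : Prop :=
  (∀ ℓ, 1 ≤ ℓ → ℓ ≤ N + 1 → 0 ≤ α ℓ ∧ 0 ≤ β ℓ) ∧
  (∀ ℓ, 1 ≤ ℓ → ℓ ≤ N + 1 → ρ ℓ ≤ γ + α ℓ - ∑ ℓ' ∈ Finset.Icc ℓ (N + 1), β ℓ')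

/-- The objective `G(w, (α, β, γ))`. -/
noncomputable def Gfun (N : ℕ) (w α β : ℕ → ℝ) (γ : ℝ) : ℝ :=
  γ + ∑ ℓ ∈ Finset.Icc 1 (N + 1), (α ℓ - β ℓ) * w ℓ

noncomputable def Eaux (N L : ℕ) (α β : ℕ → ℝ) (γ : ℝ) : ℕ → ℝ
  | 0 => γ + α (L+1) - ∑ ℓ' ∈ Finset.Icc (L+1) (N+1), β ℓ'
  | (k+1) => max 0 (Eaux N L α β γ k + min 0 (α (L-k) - β (L-k)))

lemma telescope (f : ℕ → ℝ) (n : ℕ) :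
    ∑ ℓ ∈ Finset.Icc 1 n, (f (ℓ+1) - f ℓ) = f (n+1) - f 1 := by
  induction n with
  | zero => simp
  | succ n ih => rw [Finset.sum_Icc_succ_top (by omega), ih]; ring

lemma sum_Icc_bot (f : ℕ → ℝ) (a b : ℕ) (h : a ≤ b) :
    ∑ ℓ ∈ Finset.Icc a b, f ℓ = f a + ∑ ℓ ∈ Finset.Icc (a+1) b, f ℓ := by
  rw [Finset.Icc_add_one_left_eq_Ioc, Finset.add_sum_Ioc_eq_sum_Icc h]

lemma key1 (d d' a r rb : ℝ) (hd : d = max 0 (d' + min 0 a)) (hr : 0 < r)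
    (hrb : r ≤ rb) (hfeas : r ≤ d' + a) (hd' : 0 ≤ d') :
    max 0 (r - min d rb) - (min d' rb - min d rb) - a ≤ max 0 (d' - rb) - max 0 (d - rb) := by
  simp only [min_def, max_def] at hd ⊢
  split_ifs at hd ⊢ <;> linarith

lemma key1b (d d' a : ℝ) (rb : ℝ) (hd : d = max 0 (d' + min 0 a)) (hd' : 0 ≤ d') :
    0 ≤ max 0 (d' - rb) - max 0 (d - rb) := by
  have hdd' : d ≤ d' := by
    rw [hd, max_le_iff]
    exact ⟨hd', by have := min_le_left (0:ℝ) a; linarith⟩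
  simp only [max_def]
  split_ifs <;> linarith

lemma key2 (d d' a r rb w : ℝ) (hd : d = max 0 (d' + min 0 a)) (hr : 0 < r)
    (hrb : r ≤ rb) (hfeas : r ≤ d' + a) (hd' : 0 ≤ d') (hw0 : 0 ≤ w) (hw1 : w ≤ 1) :
    (max 0 (r - min d rb) - (min d' rb - min d rb)) * w
      ≤ (max 0 (d' - rb) - max 0 (d - rb)) + a * w := by
  have h1 := key1 d d' a r rb hd hr hrb hfeas hd'
  have h2 := key1b d d' a rb hd hd'
  set c := max 0 (r - min d rb) - (min d' rb - min d rb)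
  set t := max 0 (d' - rb) - max 0 (d - rb)
  have h3 : (c - a) * w ≤ t * w := mul_le_mul_of_nonneg_right (by linarith) hw0
  have h4 : t * w ≤ t := by nlinarith [mul_nonneg h2 (sub_nonneg.mpr hw1)]
  nlinarith

theorem stmt4
    (N L : ℕ) (hL1 : 1 ≤ L) (hLN : L ≤ N)
    (ρ : ℕ → ℝ)
    (hρpos : ∀ ℓ, 1 ≤ ℓ → ℓ ≤ N + 1 → ℓ ≠ L + 1 → 0 < ρ ℓ)
    (hρ0 : ρ (L + 1) = 0)
    (α β : ℕ → ℝ) (γ : ℝ) (hD : memD N ρ α β γ) :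
    ∃ δ, memDelta L ρ δ ∧
      ∀ w, memW N L w → Jfun L ρ w δ ≤ Gfun N w α β γ := by
  obtain ⟨hαβ, hfeas⟩ := hD
  set rb := rbar L ρ with hrbdef
  have hρrb : ∀ ℓ, 1 ≤ ℓ → ℓ ≤ L + 1 → ρ ℓ ≤ rb := fun ℓ h1 h2 =>
    Finset.le_sup' ρ (Finset.mem_Icc.mpr ⟨h1, h2⟩)
  have hrb0 : 0 < rb :=
    lt_of_lt_of_le (hρpos 1 le_rfl (by omega) (by omega)) (hρrb 1 le_rfl (by omega))
  set D : ℕ → ℝ := fun ℓ => Eaux N L α β γ (L + 1 - ℓ) with hDdef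
  have hEsucc : ∀ k, Eaux N L α β γ (k+1)
      = max 0 (Eaux N L α β γ k + min 0 (α (L-k) - β (L-k))) := fun k => rfl
  have hrec : ∀ ℓ, 1 ≤ ℓ → ℓ ≤ L → D ℓ = max 0 (D (ℓ+1) + min 0 (α ℓ - β ℓ)) := by
    intro ℓ h1 h2
    have h3 : L + 1 - ℓ = (L - ℓ) + 1 := by omega
    have h4 : L - (L - ℓ) = ℓ := by omega
    have h5 : L + 1 - (ℓ + 1) = L - ℓ := by omega
    simp only [hDdef, h3, h5, hEsucc, h4]
  have hDL1 : D (L+1) = γ + α (L+1) - ∑ ℓ' ∈ Finset.Icc (L+1) (N+1), β ℓ' := by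
    simp only [hDdef, Nat.sub_self, Eaux]
  have hDγ : ∀ k, k ≤ L →
      γ - ∑ ℓ' ∈ Finset.Icc (L+1-k) (N+1), β ℓ' ≤ Eaux N L α β γ k := by
    intro k
    induction k with
    | zero =>
      intro _
      have hα := (hαβ (L+1) (by omega) (by omega)).1
      simp only [Nat.sub_zero, Eaux]
      linarith
    | succ k ih =>
      intro hk
      have ihh := ih (by omega)
      have hβ := (hαβ (L-k) (by omega) (by omega)).2
      have hα := (hαβ (L-k) (by omega) (by omega)).1
      have hsplit : ∑ ℓ' ∈ Finset.Icc (L-k) (N+1), β ℓ'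
          = β (L-k) + ∑ ℓ' ∈ Finset.Icc (L-k+1) (N+1), β ℓ' :=
        sum_Icc_bot β (L-k) (N+1) (by omega)
      have h1 : L + 1 - (k+1) = L - k := by omega
      have h2 : L - k + 1 = L + 1 - k := by omega
      rw [h1, hsplit, h2, hEsucc]
      have hmin : -β (L-k) ≤ min 0 (α (L-k) - β (L-k)) :=
        le_min (by linarith) (by linarith)
      have := le_max_right (0:ℝ) (Eaux N L α β γ k + min 0 (α (L-k) - β (L-k)))
      linarith
  have hD0 : ∀ ℓ, 1 ≤ ℓ → ℓ ≤ L + 1 → 0 ≤ D ℓ := by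
    intro ℓ h1 h2
    rcases eq_or_lt_of_le h2 with h | h
    · have hf := hfeas (L+1) (by omega) (by omega)
      rw [hρ0] at hf
      rw [h, hDL1]; linarith
    · have h3 : L + 1 - ℓ = (L - ℓ) + 1 := by omega
      simp only [hDdef, h3, hEsucc]
      exact le_max_left _ _
  have hDmono : ∀ ℓ, 1 ≤ ℓ → ℓ ≤ L → D ℓ ≤ D (ℓ+1) := by
    intro ℓ h1 h2
    rw [hrec ℓ h1 h2]
    refine max_le (hD0 (ℓ+1) (by omega) (by omega)) ?_
    have := min_le_left (0:ℝ) (α ℓ - β ℓ)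
    linarith
  have hDnext : ∀ ℓ, 1 ≤ ℓ → ℓ ≤ L →
      γ - ∑ ℓ' ∈ Finset.Icc (ℓ+1) (N+1), β ℓ' ≤ D (ℓ+1) := by
    intro ℓ h1 h2
    have := hDγ (L - ℓ) (by omega)
    have h3 : L + 1 - (L - ℓ) = ℓ + 1 := by omega
    rw [h3] at this
    simpa only [hDdef, show L + 1 - (ℓ+1) = L - ℓ by omega] using this
  refine ⟨fun ℓ => min (D ℓ) rb, ⟨?_, ?_, ?_⟩, ?_⟩
  · exact le_min (hD0 1 le_rfl (by omega)) hrb0.le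
  · intro ℓ h1 h2
    exact min_le_min (hDmono ℓ h1 h2) le_rfl
  · exact min_le_right _ _
  · intro w hw
    obtain ⟨hwb, hwL⟩ := hw
    simp only [Jfun, Gfun]
    have hterm : ∀ ℓ ∈ Finset.Icc 1 L,
        (max 0 (ρ ℓ - min (D ℓ) rb) - (min (D (ℓ+1)) rb - min (D ℓ) rb)) * w ℓ
          ≤ (max 0 (D (ℓ+1) - rb) - max 0 (D ℓ - rb)) + (α ℓ - β ℓ) * w ℓ := by
      intro ℓ hℓ
      rw [Finset.mem_Icc] at hℓ
      obtain ⟨h1, h2⟩ := hℓ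
      have hfeas' : ρ ℓ ≤ D (ℓ+1) + (α ℓ - β ℓ) := by
        have hf := hfeas ℓ (by omega) (by omega)
        have hsplit : ∑ ℓ' ∈ Finset.Icc ℓ (N+1), β ℓ'
            = β ℓ + ∑ ℓ' ∈ Finset.Icc (ℓ+1) (N+1), β ℓ' :=
          sum_Icc_bot β ℓ (N+1) (by omega)
        have := hDnext ℓ h1 h2
        rw [hsplit] at hf
        linarith
      exact key2 (D ℓ) (D (ℓ+1)) (α ℓ - β ℓ) (ρ ℓ) rb (w ℓ)
        (hrec ℓ h1 h2) (hρpos ℓ (by omega) (by omega) (by omega))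
        (hρrb ℓ (by omega) (by omega)) hfeas' (hD0 (ℓ+1) (by omega) (by omega))
        (hwb ℓ (by omega) (by omega)).1 (hwb ℓ (by omega) (by omega)).2
    have hsum1 := Finset.sum_le_sum hterm
    have hsum2 : ∑ ℓ ∈ Finset.Icc 1 L,
        ((max 0 (D (ℓ+1) - rb) - max 0 (D ℓ - rb)) + (α ℓ - β ℓ) * w ℓ)
        = (max 0 (D (L+1) - rb) - max 0 (D 1 - rb))
          + ∑ ℓ ∈ Finset.Icc 1 L, (α ℓ - β ℓ) * w ℓ := by
      rw [Finset.sum_add_distrib, telescope (fun ℓ => max 0 (D ℓ - rb)) L]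
    have hG1 : ∑ ℓ ∈ Finset.Icc 1 (N+1), (α ℓ - β ℓ) * w ℓ
        = ∑ ℓ ∈ Finset.Icc 1 L, (α ℓ - β ℓ) * w ℓ
          + ∑ ℓ ∈ Finset.Icc (L+1) (N+1), (α ℓ - β ℓ) * w ℓ := by
      rw [Finset.Icc_add_one_left_eq_Ioc, ← zero_add (1:ℕ), Finset.Icc_add_one_left_eq_Ioc, Finset.Icc_add_one_left_eq_Ioc]
      exact (Finset.sum_Ioc_consecutive _ (Nat.zero_le L) (by omega)).symm
    have hG2 : ∑ ℓ ∈ Finset.Icc (L+1) (N+1), (α ℓ - β ℓ) * w ℓ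
        = (α (L+1) - β (L+1)) * w (L+1)
          + ∑ ℓ ∈ Finset.Icc (L+2) (N+1), (α ℓ - β ℓ) * w ℓ :=
      sum_Icc_bot _ (L+1) (N+1) (by omega)
    have hB : ∑ ℓ' ∈ Finset.Icc (L+1) (N+1), β ℓ'
        = β (L+1) + ∑ ℓ' ∈ Finset.Icc (L+2) (N+1), β ℓ' :=
      sum_Icc_bot β (L+1) (N+1) (by omega)
    have hsum3 : ∑ ℓ ∈ Finset.Icc (L+2) (N+1), (-β ℓ)
        ≤ ∑ ℓ ∈ Finset.Icc (L+2) (N+1), (α ℓ - β ℓ) * w ℓ := by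
      refine Finset.sum_le_sum ?_
      intro ℓ hℓ
      rw [Finset.mem_Icc] at hℓ
      have hα := (hαβ ℓ (by omega) (by omega)).1
      have hβ := (hαβ ℓ (by omega) (by omega)).2
      have hw0 := (hwb ℓ (by omega) (by omega)).1
      have hw1 := (hwb ℓ (by omega) (by omega)).2
      nlinarith [mul_nonneg hα hw0, mul_nonneg hβ (sub_nonneg.mpr hw1)]
    have hsum3' : ∑ ℓ ∈ Finset.Icc (L+2) (N+1), (-β ℓ)
        = -∑ ℓ ∈ Finset.Icc (L+2) (N+1), β ℓ := by
      rw [Finset.sum_neg_distrib]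
    have hclamp : min (D (L+1)) rb + max 0 (D (L+1) - rb) = D (L+1) := by
      rcases le_total (D (L+1)) rb with h | h
      · rw [min_eq_left h, max_eq_left (by linarith)]; ring
      · rw [min_eq_right h, max_eq_right (by linarith)]; ring
    have hs1 : 0 ≤ max 0 (D 1 - rb) := le_max_left _ _
    rw [hwL] at hG2
    rw [hsum2] at hsum1
    rw [hsum3'] at hsum3
    rw [hG1, hG2]
    linarith
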